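/- The beta invariant of the minimal matroid T_{r,n} equals 1, for 0 < r < n. -/

import Mathlib

open Matroid

/-- Deletion of a set of elements from a matroid. -/
def mDelete (M : Matroid ℕ) (D : Set ℕ) : Matroid ℕ := M ↾ (M.E \ D)

/-- Contraction of a set of elements, defined by duality: `M ／ C = (M✶ ＼ C)✶`. -/
def mContract (M : Matroid ℕ) (C : Set ℕ) : Matroid ℕ := (mDelete M✶ C)✶

/-- `e` is a loop of `M`: an element of the ground set whose singleton is dependent. -/
def IsLoopE (M : Matroid ℕ) (e : ℕ) : Prop := e ∈ M.E ∧ ¬ M.Indep {e}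

/-- `e` is a coloop of `M`: an element of the ground set lying in every base. -/
def IsColoopE (M : Matroid ℕ) (e : ℕ) : Prop := e ∈ M.E ∧ ∀ B, M.IsBase B → e ∈ B

lemma encard_Icc' (a b : ℕ) : (Set.Icc a b).encard = (b + 1 - a : ℕ) := by
  rw [← Finset.coe_Icc, Set.encard_coe_eq_coe_finsetCard, Nat.card_Icc]

lemma del_base_iff {M : Matroid ℕ} {D : Set ℕ} {B₁ : Set ℕ} (h₁ : M.IsBase B₁)
    (h₂ : Disjoint B₁ D) {B : Set ℕ} :
    (mDelete M D).IsBase B ↔ M.IsBase B ∧ Disjoint B D := by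
  constructor
  · intro hB
    have hBi : (M ↾ (M.E \ D)).Indep B := hB.indep
    rw [Matroid.restrict_indep_iff] at hBi
    obtain ⟨hind, hsub⟩ := hBi
    have hbase : M.IsBase B := by
      by_contra hnb
      obtain ⟨e, he, hi⟩ := hind.exists_insert_of_not_isBase hnb h₁
      have hins : (mDelete M D).Indep (insert e B) := by
        show (M ↾ (M.E \ D)).Indep _
        rw [Matroid.restrict_indep_iff]
        exact ⟨hi, Set.insert_subset ⟨h₁.subset_ground he.1,
          Set.disjoint_left.mp h₂ he.1⟩ hsub⟩
      have := hB.eq_of_subset_indep hins (Set.subset_insert e B)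
      exact he.2 (this ▸ Set.mem_insert e B)
    exact ⟨hbase, Set.disjoint_left.mpr fun a ha => (hsub ha).2⟩
  · rintro ⟨hB, hD⟩
    have hsub : B ⊆ M.E \ D := Set.subset_diff.mpr ⟨hB.subset_ground, hD⟩
    have hb : M.IsBasis B (M.E \ D) := by
      rw [Matroid.isBasis_iff Set.diff_subset]
      exact ⟨hB.indep, hsub, fun J hJ hBJ _ => hB.eq_of_subset_indep hJ hBJ⟩
    exact hb.restrict_isBase

lemma con_base_iff {M : Matroid ℕ} {e : ℕ} {B₁ : Set ℕ} (h₁ : M.IsBase B₁) (he₁ : e ∈ B₁)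
    {B : Set ℕ} :
    (mContract M {e}).IsBase B ↔ M.IsBase (insert e B) ∧ B ⊆ M.E \ {e} := by
  have heE : e ∈ M.E := h₁.subset_ground he₁
  have hdual : M✶.IsBase (M.E \ B₁) := h₁.compl_isBase_dual
  have hdis : Disjoint (M.E \ B₁) ({e} : Set ℕ) := by
    rw [Set.disjoint_singleton_right]
    exact fun h => h.2 he₁
  have hEeq : (mDelete M✶ {e}).E = M.E \ {e} := rfl
  rw [mContract, Matroid.dual_isBase_iff', hEeq, del_base_iff hdual hdis,
    Matroid.dual_isBase_iff']
  constructor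
  · rintro ⟨⟨⟨hbase, _⟩, _⟩, hBsub⟩
    have hset : M.E \ ((M.E \ {e}) \ B) = insert e B := by
      ext x
      simp only [Set.mem_diff, Set.mem_singleton_iff, Set.mem_insert_iff]
      constructor
      · rintro ⟨hxE, hx⟩
        by_cases hxe : x = e
        · exact Or.inl hxe
        · exact Or.inr (by_contra fun hxB => hx ⟨⟨hxE, hxe⟩, hxB⟩)
      · rintro (rfl | hxB)
        · exact ⟨heE, fun h => h.1.2 rfl⟩
        · exact ⟨(hBsub hxB).1, fun h => h.2 hxB⟩
    rw [hset] at hbase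
    exact ⟨hbase, hBsub⟩
  · rintro ⟨hbase, hBsub⟩
    have hset : M.E \ ((M.E \ {e}) \ B) = insert e B := by
      ext x
      simp only [Set.mem_diff, Set.mem_singleton_iff, Set.mem_insert_iff]
      constructor
      · rintro ⟨hxE, hx⟩
        by_cases hxe : x = e
        · exact Or.inl hxe
        · exact Or.inr (by_contra fun hxB => hx ⟨⟨hxE, hxe⟩, hxB⟩)
      · rintro (rfl | hxB)
        · exact ⟨heE, fun h => h.1.2 rfl⟩
        · exact ⟨(hBsub hxB).1, fun h => h.2 hxB⟩
    refine ⟨⟨⟨by rw [hset]; exact hbase, Set.diff_subset.trans Set.diff_subset⟩, ?_⟩, hBsub⟩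
    rw [Set.disjoint_singleton_right]
    exact fun h => h.1.2 rfl

lemma key_beta (β : Matroid ℕ → ℤ)
    (hβ0 : ∀ e : ℕ, β (Matroid.loopyOn {e}) = 0)
    (hβ1 : ∀ e : ℕ, β (Matroid.freeOn {e}) = 1)
    (hβlc : ∀ M : Matroid ℕ, 2 ≤ M.E.encard → (∃ e, IsLoopE M e ∨ IsColoopE M e) → β M = 0)
    (hβdc : ∀ (M : Matroid ℕ) (i : ℕ), i ∈ M.E → ¬ IsLoopE M i → ¬ IsColoopE M i →
      β M = β (mContract M {i}) + β (mDelete M {i})) :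
    ∀ n r (M : Matroid ℕ), 0 < r → r < n → M.E = Set.Icc 1 n →
      (∀ B : Set ℕ, M.IsBase B ↔
        B ⊆ Set.Icc 1 n ∧ B.encard = r ∧ (B ∩ Set.Ioc r n).encard ≤ 1) →
      β M = 1 := by
  intro n
  induction n using Nat.strong_induction_on with
  | _ n IH =>
  intro r M hr hrn hE hbase
  have hBfull : M.IsBase (Set.Icc 1 r) := by
    rw [hbase]
    refine ⟨Set.Icc_subset_Icc_right hrn.le, ?_, ?_⟩
    · rw [encard_Icc']; exact_mod_cast (by omega : r + 1 - 1 = r)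
    · have h0 : Set.Icc 1 r ∩ Set.Ioc r n = ∅ := by
        rw [Set.eq_empty_iff_forall_notMem]
        rintro x ⟨h1, h2⟩
        rw [Set.mem_Icc] at h1
        rw [Set.mem_Ioc] at h2
        omega
      rw [h0]; simp
  have hnB1 : n ∉ Set.Icc 1 (r-1) := by
    intro hmem
    rw [Set.mem_Icc] at hmem
    omega
  have hBn : M.IsBase (insert n (Set.Icc 1 (r-1))) := by
    rw [hbase]
    refine ⟨Set.insert_subset (Set.mem_Icc.mpr ⟨by omega, le_rfl⟩)
      (Set.Icc_subset_Icc_right (by omega)), ?_, ?_⟩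
    · rw [Set.encard_insert_of_notMem hnB1, encard_Icc']
      exact_mod_cast (by omega : r - 1 + 1 - 1 + 1 = r)
    · refine le_trans (Set.encard_le_encard ?_) (le_of_eq (Set.encard_singleton n))
      rintro x ⟨(rfl | hx1), hx2⟩
      · rfl
      · rw [Set.mem_Icc] at hx1
        rw [Set.mem_Ioc] at hx2
        simp only [Set.mem_singleton_iff]; omega
  have hnE : n ∈ M.E := by
    rw [hE, Set.mem_Icc]; omega
  have hnl : ¬ IsLoopE M n := fun h => h.2 (Matroid.indep_iff.mpr
    ⟨_, hBn, Set.singleton_subset_iff.mpr (Set.mem_insert n _)⟩)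
  have hnc : ¬ IsColoopE M n := by
    intro h
    have h1 := h.2 _ hBfull
    rw [Set.mem_Icc] at h1; omega
  have hsetE : Set.Icc 1 n \ {n} = Set.Icc 1 (n-1) := by
    ext x
    simp only [Set.mem_diff, Set.mem_Icc, Set.mem_singleton_iff]
    omega
  have hE' : M.E \ {n} = Set.Icc 1 (n-1) := by rw [hE, hsetE]
  have hdelE : (mDelete M {n}).E = Set.Icc 1 (n-1) := hE'
  have hconE : (mContract M {n}).E = Set.Icc 1 (n-1) := hE'
  have hdc := hβdc M n hnE hnl hnc
  have hndis : Disjoint (Set.Icc 1 r) ({n} : Set ℕ) := by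
    rw [Set.disjoint_singleton_right, Set.mem_Icc]; omega
  have hdelbase : ∀ B : Set ℕ, (mDelete M {n}).IsBase B ↔ M.IsBase B ∧ Disjoint B {n} :=
    fun B => del_base_iff hBfull hndis
  have hconbase : ∀ B : Set ℕ,
      (mContract M {n}).IsBase B ↔ M.IsBase (insert n B) ∧ B ⊆ M.E \ {n} :=
    fun B => con_base_iff hBn (Set.mem_insert n _)
  by_cases hn2 : r + 1 < n
  · -- n > r + 1 : contract has a loop, delete is T_{r,n-1}
    have hcz : β (mContract M {n}) = 0 := by
      apply hβlc
      · rw [hconE, encard_Icc']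
        exact_mod_cast (by omega : 2 ≤ n - 1 + 1 - 1)
      · refine ⟨r+1, Or.inl ⟨?_, ?_⟩⟩
        · rw [hconE, Set.mem_Icc]; omega
        · intro hind
          rw [Matroid.indep_iff] at hind
          obtain ⟨B, hB, hsub⟩ := hind
          rw [hconbase] at hB
          obtain ⟨hB, _⟩ := hB
          rw [hbase] at hB
          have hpair : ({r+1, n} : Set ℕ) ⊆ (insert n B) ∩ Set.Ioc r n := by
            rintro x (rfl | rfl)
            · exact ⟨Set.mem_insert_of_mem _ (hsub rfl),
                Set.mem_Ioc.mpr ⟨by omega, by omega⟩⟩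
            · exact ⟨Set.mem_insert _ _, Set.mem_Ioc.mpr ⟨by omega, le_rfl⟩⟩
          have h2 := (Set.encard_pair (show r+1 ≠ n by omega)) ▸ Set.encard_le_encard hpair
          have h3 := le_trans h2 hB.2.2
          norm_num at h3
    have hdz : β (mDelete M {n}) = 1 := by
      apply IH (n-1) (by omega) r _ hr (by omega) hdelE
      intro B
      rw [hdelbase, hbase, Set.disjoint_singleton_right]
      constructor
      · rintro ⟨⟨hsub, hcard, htail⟩, hnB⟩
        refine ⟨fun x hx => ?_, hcard, le_trans (Set.encard_le_encard ?_) htail⟩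
        · have h1 := hsub hx
          rw [Set.mem_Icc] at h1 ⊢
          have hxn : x ≠ n := fun h => hnB (h ▸ hx)
          omega
        · exact Set.inter_subset_inter_right _ (Set.Ioc_subset_Ioc_right (by omega))
      · rintro ⟨hsub, hcard, htail⟩
        have hnB : n ∉ B := fun h => by
          have h1 := Set.mem_Icc.mp (hsub h); omega
        refine ⟨⟨hsub.trans (Set.Icc_subset_Icc_right (by omega)), hcard, ?_⟩, hnB⟩
        have heq : B ∩ Set.Ioc r n = B ∩ Set.Ioc r (n-1) := by
          ext x
          simp only [Set.mem_inter_iff, Set.mem_Ioc]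
          constructor
          · rintro ⟨hxB, h1, h2⟩
            have h3 := Set.mem_Icc.mp (hsub hxB)
            exact ⟨hxB, h1, by omega⟩
          · rintro ⟨hxB, h1, h2⟩
            exact ⟨hxB, h1, by omega⟩
        rw [heq]; exact htail
    rw [hdc, hcz, hdz]
    norm_num
  · -- n = r + 1
    have hnr : n = r + 1 := by omega
    by_cases hr1 : r = 1
    · -- r = 1, n = 2
      subst hr1
      have hn2' : n = 2 := by omega
      subst hn2'
      have hone : Set.Icc 1 (2-1) = ({1} : Set ℕ) := by
        ext x; simp only [Set.mem_Icc, Set.mem_singleton_iff]; omega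
      have hdel : mDelete M {2} = Matroid.freeOn {1} := by
        refine Matroid.ext_isBase (by rw [hdelE, hone]; rfl) ?_
        intro B hB
        rw [hdelbase, Matroid.freeOn_isBase_iff, hbase, Set.disjoint_singleton_right]
        constructor
        · rintro ⟨⟨hsub, hcard, _⟩, h2B⟩
          have hsub1 : B ⊆ ({1} : Set ℕ) := by
            intro x hx
            have h1 := Set.mem_Icc.mp (hsub hx)
            have hx2 : x ≠ 2 := fun h => h2B (h ▸ hx)
            simp only [Set.mem_singleton_iff]; omega
          exact (Set.finite_singleton 1).eq_of_subset_of_encard_le' hsub1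
            (by rw [hcard, Set.encard_singleton]; norm_num)
        · rintro rfl
          refine ⟨⟨?_, ?_, ?_⟩, by simp⟩
          · intro x hx
            simp only [Set.mem_singleton_iff] at hx
            subst hx; exact Set.mem_Icc.mpr ⟨le_rfl, by omega⟩
          · rw [Set.encard_singleton]; norm_num
          · have h0 : ({1} : Set ℕ) ∩ Set.Ioc 1 2 = ∅ := by
              rw [Set.eq_empty_iff_forall_notMem]
              rintro x ⟨h1, h2⟩
              rw [Set.mem_singleton_iff] at h1
              rw [Set.mem_Ioc] at h2
              omega
            rw [h0]; simp
      have hcon : mContract M {2} = Matroid.loopyOn {1} := by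
        refine Matroid.ext_isBase (by rw [hconE, hone]; rfl) ?_
        intro B hB
        rw [hconbase, Matroid.loopyOn_isBase_iff, hbase]
        constructor
        · rintro ⟨⟨hsub, hcard, _⟩, hBsub⟩
          have h2B : 2 ∉ B := fun h => (hBsub h).2 rfl
          rw [Set.encard_insert_of_notMem h2B] at hcard
          have hc0 : B.encard + 1 = 0 + 1 := by
            rw [zero_add]; exact_mod_cast hcard
          exact Set.encard_eq_zero.mp (WithTop.add_right_cancel ENat.one_ne_top hc0)
        · rintro rfl
          have h25 : insert 2 (∅ : Set ℕ) = {2} := by simp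
          rw [h25]
          refine ⟨⟨?_, ?_, ?_⟩, Set.empty_subset _⟩
          · intro x hx
            simp only [Set.mem_singleton_iff] at hx
            subst hx; exact Set.mem_Icc.mpr ⟨by omega, le_rfl⟩
          · rw [Set.encard_singleton]; norm_num
          · refine le_trans (Set.encard_le_encard Set.inter_subset_left) ?_
            rw [Set.encard_singleton]
      rw [hdc, hdel, hcon, hβ0 1, hβ1 1]
      norm_num
    · -- r ≥ 2, n = r + 1
      have hdz : β (mDelete M {n}) = 0 := by
        apply hβlc
        · rw [hdelE, encard_Icc']
          exact_mod_cast (by omega : 2 ≤ n - 1 + 1 - 1)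
        · refine ⟨1, Or.inr ⟨?_, ?_⟩⟩
          · rw [hdelE]; exact Set.mem_Icc.mpr ⟨le_rfl, by omega⟩
          · intro B hB
            rw [hdelbase, hbase, Set.disjoint_singleton_right] at hB
            obtain ⟨⟨hsub, hcard, _⟩, hnB⟩ := hB
            have hsubr : B ⊆ Set.Icc 1 r := by
              intro x hx
              have h1 := Set.mem_Icc.mp (hsub hx)
              have hxn : x ≠ n := fun h => hnB (h ▸ hx)
              exact Set.mem_Icc.mpr ⟨by omega, by omega⟩
            have hBeq : B = Set.Icc 1 r :=
              (Set.finite_Icc 1 r).eq_of_subset_of_encard_le' hsubr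
                (by rw [hcard, encard_Icc']; exact_mod_cast (by omega : r + 1 - 1 ≤ r))
            rw [hBeq]; exact Set.mem_Icc.mpr ⟨le_rfl, by omega⟩
      have hcz : β (mContract M {n}) = 1 := by
        apply IH (n-1) (by omega) (r-1) _ (by omega) (by omega) hconE
        intro B
        rw [hconbase, hbase, hE']
        constructor
        · rintro ⟨⟨hsub, hcard, _⟩, hBsub⟩
          have hnB : n ∉ B := fun h => by
            have h1 := Set.mem_Icc.mp (hBsub h); omega
          rw [Set.encard_insert_of_notMem hnB] at hcard
          have hBcard : B.encard = ↑(r-1) := by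
            apply WithTop.add_right_cancel (show (1:ℕ∞) ≠ ⊤ by simp)
            show B.encard + 1 = ((r-1 : ℕ) : ℕ∞) + 1
            rw [hcard]
            exact_mod_cast (by omega : r = r - 1 + 1)
          refine ⟨hBsub, hBcard, ?_⟩
          have hsubs : B ∩ Set.Ioc (r-1) (n-1) ⊆ ({r} : Set ℕ) := by
            rintro x ⟨hxB, hx2⟩
            rw [Set.mem_Ioc] at hx2
            simp only [Set.mem_singleton_iff]; omega
          exact le_trans (Set.encard_le_encard hsubs) (by simp)
        · rintro ⟨hsub, hcard, _⟩
          have hnB : n ∉ B := fun h => by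
            have h1 := Set.mem_Icc.mp (hsub h); omega
          refine ⟨⟨?_, ?_, ?_⟩, hsub⟩
          · exact Set.insert_subset (Set.mem_Icc.mpr ⟨by omega, le_rfl⟩)
              (hsub.trans (Set.Icc_subset_Icc_right (by omega)))
          · rw [Set.encard_insert_of_notMem hnB, hcard]
            exact_mod_cast (by omega : r - 1 + 1 = r)
          · have hsubs : insert n B ∩ Set.Ioc r n ⊆ ({n} : Set ℕ) := by
              rintro x ⟨(rfl | hxB), hx2⟩
              · rfl
              · have h1 := Set.mem_Icc.mp (hsub hxB)
                rw [Set.mem_Ioc] at hx2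
                simp only [Set.mem_singleton_iff]; omega
            exact le_trans (Set.encard_le_encard hsubs) (by simp)
      rw [hdc, hcz, hdz]
      norm_num

/-- The beta invariant of the minimal matroid `T_{r,n}` equals `1`, for `0 < r < n`.
`T_{r,n}` is characterised by its bases: the `r`-subsets `B` of `{1,…,n}` with
at most one element of `B` in `{r+1,…,n}` (equivalently, `U_{r,r+1}` with `n-r-1`
elements added in parallel to one fixed element). -/
theorem beta_minimal_matroid (β : Matroid ℕ → ℤ)
    (hβ0 : ∀ e : ℕ, β (Matroid.loopyOn {e}) = 0)
    (hβ1 : ∀ e : ℕ, β (Matroid.freeOn {e}) = 1)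
    (hβlc : ∀ M : Matroid ℕ, 2 ≤ M.E.encard → (∃ e, IsLoopE M e ∨ IsColoopE M e) → β M = 0)
    (hβdc : ∀ (M : Matroid ℕ) (i : ℕ), i ∈ M.E → ¬ IsLoopE M i → ¬ IsColoopE M i →
      β M = β (mContract M {i}) + β (mDelete M {i}))
    (r n : ℕ) (hr : 0 < r) (hrn : r < n)
    (M : Matroid ℕ) (hE : M.E = Set.Icc 1 n)
    (hbase : ∀ B : Set ℕ, M.IsBase B ↔
      B ⊆ Set.Icc 1 n ∧ B.encard = r ∧ (B ∩ Set.Ioc r n).encard ≤ 1) :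
    β M = 1 := by
  exact key_beta β hβ0 hβ1 hβlc hβdc n r M hr hrn hE hbase
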